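/- Let S ⊆ ℝ be a dense subset and let a, b ∈ ℝ with a > b. Then there exist a continuous nonincreasing function h : [0,1] → ℝ with h(0) = a and h(1) = b, and an open set W ⊆ (0,1) whose complement [0,1]∖W has Lebesgue measure zero, such that h is locally constant on W and h(W) ⊆ S. -/

import Mathlib

open MeasureTheory Set

lemma exists_dense_seq_aux (S : Set ℝ) (hS : Dense S) (a b : ℝ) (hab : b < a) :
    ∃ q : ℕ → ℝ, Function.Injective q ∧ (∀ n, q n ∈ S ∩ Set.Ioo b a) ∧
      ∀ s t : ℝ, b ≤ s → t ≤ a → s < t → ∃ n, s < q n ∧ q n < t := by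
  classical
  obtain ⟨T, hTS, hTc, hTd⟩ := hS.exists_countable_dense_subset
  set T' : Set ℝ := T ∩ Set.Ioo b a with hT'def
  have hT'c : T'.Countable := hTc.mono inter_subset_left
  have hdense : ∀ s t : ℝ, b ≤ s → t ≤ a → s < t → ∃ c ∈ T', s < c ∧ c < t := by
    intro s t hbs hta hst
    obtain ⟨c, hcT, hc⟩ := hTd.exists_between hst
    exact ⟨c, ⟨hcT, lt_of_le_of_lt hbs hc.1, lt_of_lt_of_le hc.2 hta⟩, hc.1, hc.2⟩
  have hT'inf : T'.Infinite := by
    intro hfin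
    obtain ⟨m, hmT', hmin⟩ := Set.exists_min_image T' id hfin
      (let ⟨c, hc, _⟩ := hdense b a le_rfl le_rfl hab; ⟨c, hc⟩)
    obtain ⟨c, hcT', hc1, hc2⟩ := hdense b m le_rfl (hmT'.2.2).le hmT'.2.1
    exact absurd (hmin c hcT') (not_le.mpr hc2)
  haveI := hT'c.to_subtype
  haveI := hT'inf.to_subtype
  obtain ⟨d⟩ := nonempty_denumerable ↥T'
  set E : ↥T' ≃ ℕ := Denumerable.eqv ↥T' with hE
  refine ⟨fun n => (E.symm n : ℝ), ?_, ?_, ?_⟩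
  · exact Subtype.val_injective.comp E.symm.injective
  · intro n
    have := (E.symm n).2
    exact ⟨hTS this.1, this.2⟩
  · intro s t hbs hta hst
    obtain ⟨c, hcT', hc1, hc2⟩ := hdense s t hbs hta hst
    refine ⟨E ⟨c, hcT'⟩, ?_, ?_⟩ <;> simp [hc1, hc2]

section Construction

variable (q : ℕ → ℝ)


variable (q : ℕ → ℝ)

noncomputable def wt : ℕ → ℝ := fun n => (1 / 2 : ℝ) ^ n * (1 / 2)

lemma wt_pos (n : ℕ) : 0 < wt n := by
  unfold wt; positivity

lemma wt_summable : Summable wt := summable_geometric_two.mul_right _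

lemma wt_tsum : ∑' n, wt n = 1 := by
  unfold wt
  rw [tsum_mul_right, tsum_geometric_two]; norm_num

noncomputable def uf : ℝ → ℝ := fun t => ∑' n, if q n < t then wt n else 0

lemma uf_term_nonneg (t : ℝ) (n : ℕ) : 0 ≤ (if q n < t then wt n else 0) := by
  split <;> simp [wt_pos n, le_of_lt]

lemma uf_term_le (t : ℝ) (n : ℕ) : (if q n < t then wt n else 0) ≤ wt n := by
  split <;> simp [wt_pos n, le_of_lt]

lemma uf_summable (t : ℝ) : Summable fun n => if q n < t then wt n else 0 :=
  Summable.of_nonneg_of_le (uf_term_nonneg q t) (uf_term_le q t) wt_summable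

lemma uf_nonneg (t : ℝ) : 0 ≤ uf q t :=
  tsum_nonneg (uf_term_nonneg q t)

lemma uf_le_one (t : ℝ) : uf q t ≤ 1 := by
  rw [← wt_tsum]
  exact Summable.tsum_le_tsum (uf_term_le q t) (uf_summable q t) wt_summable

lemma uf_key {s t : ℝ} (n₀ : ℕ) (hs : s ≤ q n₀) (ht : q n₀ < t) :
    uf q s + wt n₀ ≤ uf q t := by
  have hsingle : HasSum (fun m => if m = n₀ then wt n₀ else 0) (wt n₀) :=
    hasSum_ite_eq n₀ (wt n₀)
  have h1 : uf q s + wt n₀ =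
      ∑' m, ((if q m < s then wt m else 0) + if m = n₀ then wt n₀ else 0) := by
    rw [Summable.tsum_add (uf_summable q s) hsingle.summable, hsingle.tsum_eq]; rfl
  rw [h1]
  refine Summable.tsum_le_tsum ?_ ((uf_summable q s).add hsingle.summable) (uf_summable q t)
  intro m
  by_cases hm : q m < s
  · have hm' : q m < t := hm.trans_le (hs.trans ht.le)
    have hne : m ≠ n₀ := fun h => absurd (h ▸ hm) (not_lt.mpr hs)
    simp [hm, hm', hne]
  · by_cases hm0 : m = n₀
    · subst hm0
      simp [hm, ht]
    · simpa [hm, hm0] using uf_term_nonneg q t m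


section G

variable {a b : ℝ}



noncomputable def gf (a b : ℝ) (q : ℕ → ℝ) : ℝ → ℝ :=
  fun x => sSup (insert b {t | t ∈ Icc b a ∧ uf q t ≤ x})

variable (hab : b < a) (hq : ∀ n, q n ∈ Ioo b a)
  (hdense : ∀ s t : ℝ, b ≤ s → t ≤ a → s < t → ∃ n, s < q n ∧ q n < t)

lemma gA_nonempty (x : ℝ) : (insert b {t | t ∈ Icc b a ∧ uf q t ≤ x}).Nonempty :=
  ⟨b, mem_insert _ _⟩

include hab in
lemma gA_bdd (x : ℝ) : BddAbove (insert b {t | t ∈ Icc b a ∧ uf q t ≤ x}) := by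
  refine ⟨a, ?_⟩
  rintro t ht
  rcases mem_insert_iff.1 ht with rfl | ⟨ht1, _⟩
  · exact hab.le
  · exact ht1.2

include hab in
lemma gf_mono : Monotone (gf a b q) := by
  intro x y hxy
  apply csSup_le_csSup (gA_bdd q hab y) (gA_nonempty q x)
  rintro t ht
  rcases mem_insert_iff.1 ht with rfl | ⟨ht1, ht2⟩
  · exact mem_insert _ _
  · exact Or.inr ⟨ht1, ht2.trans hxy⟩

include hab in
lemma gf_mem (x : ℝ) : gf a b q x ∈ Icc b a := by
  constructor
  · exact le_csSup (gA_bdd q hab x) (mem_insert _ _)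
  · apply csSup_le (gA_nonempty q x)
    rintro t ht
    rcases mem_insert_iff.1 ht with rfl | ⟨ht1, _⟩
    · exact hab.le
    · exact ht1.2

include hdense in
lemma uf_strict {s t : ℝ} (hsI : s ∈ Icc b a) (htI : t ∈ Icc b a) (hst : s < t) :
    uf q s < uf q t := by
  obtain ⟨n, hn1, hn2⟩ := hdense s t hsI.1 htI.2 hst
  have := uf_key q n hn1.le hn2
  have := wt_pos n
  linarith

include hab hdense in
lemma gf_uf {t : ℝ} (ht : t ∈ Icc b a) : gf a b q (uf q t) = t := by
  apply le_antisymm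
  · apply csSup_le (gA_nonempty q _)
    rintro s hs
    rcases mem_insert_iff.1 hs with rfl | ⟨hs1, hs2⟩
    · exact ht.1
    · by_contra hts
      push_neg at hts
      exact absurd hs2 (not_le.mpr (uf_strict q hdense ht hs1 hts))
  · exact le_csSup (gA_bdd q hab _) (Or.inr ⟨ht, le_rfl⟩)

include hab in
lemma gf_of_one_le {x : ℝ} (hx : 1 ≤ x) : gf a b q x = a := by
  apply le_antisymm ((gf_mem q hab x).2)
  exact le_csSup (gA_bdd q hab x) (Or.inr ⟨⟨hab.le, le_rfl⟩, (uf_le_one q a).trans hx⟩)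

include hdense in
lemma uf_pos {t : ℝ} (ht : t ∈ Ioc b a) : 0 < uf q t := by
  obtain ⟨n, hn1, hn2⟩ := hdense b t le_rfl ht.2 ht.1
  have := uf_key q n hn1.le hn2
  have := wt_pos n
  have := uf_nonneg q b
  linarith

include hab hdense in
lemma gf_of_nonpos {x : ℝ} (hx : x ≤ 0) : gf a b q x = b := by
  apply le_antisymm _ ((gf_mem q hab x).1)
  apply csSup_le (gA_nonempty q x)
  rintro t ht
  rcases mem_insert_iff.1 ht with rfl | ⟨ht1, ht2⟩
  · exact le_rfl
  · by_contra hbt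
    push_neg at hbt
    have := uf_pos q hdense ⟨hbt, ht1.2⟩
    linarith [ht2.trans hx]

include hab hq in
lemma gf_const {n : ℕ} {x : ℝ} (hx1 : uf q (q n) < x) (hx2 : x < uf q (q n) + wt n) :
    gf a b q x = q n := by
  have hqI : q n ∈ Icc b a := Ioo_subset_Icc_self (hq n)
  apply le_antisymm
  · apply csSup_le (gA_nonempty q x)
    rintro t ht
    rcases mem_insert_iff.1 ht with rfl | ⟨ht1, ht2⟩
    · exact hqI.1
    · by_contra hqt
      push_neg at hqt
      have := uf_key q n le_rfl hqt
      linarith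
  · exact le_csSup (gA_bdd q hab x) (Or.inr ⟨hqI, hx1.le⟩)

include hab hdense in
lemma gf_continuous : Continuous (gf a b q) := by
  have hrange : Icc b a ⊆ range (gf a b q) := fun y hy => ⟨uf q y, gf_uf q hab hdense hy⟩
  rw [continuous_iff_continuousAt]
  intro x
  rw [← continuousWithinAt_univ, ← Iic_union_Ici (a := x)]
  have hmem := gf_mem q hab x
  refine ContinuousWithinAt.union ?_ ?_
  · rcases eq_or_lt_of_le hmem.1 with hb | hb
    · exact continuousWithinAt_const.congr
        (fun y hy => le_antisymm ((gf_mono q hab hy).trans hb.symm.le) (gf_mem q hab y).1)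
        hb.symm
    · apply continuousWithinAt_left_of_monotoneOn_of_image_mem_nhdsWithin
        ((gf_mono q hab).monotoneOn univ) Filter.univ_mem
      rw [image_univ]
      exact Filter.mem_of_superset (Ioc_mem_nhdsLE_of_mem ⟨hb, hmem.2⟩)
        (Ioc_subset_Icc_self.trans hrange)
  · rcases eq_or_lt_of_le hmem.2 with ha | ha
    · exact continuousWithinAt_const.congr
        (fun y hy => le_antisymm (gf_mem q hab y).2 (ha.symm.le.trans (gf_mono q hab hy)))
        ha
    · apply continuousWithinAt_right_of_monotoneOn_of_image_mem_nhdsWithin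
        ((gf_mono q hab).monotoneOn univ) Filter.univ_mem
      rw [image_univ]
      exact Filter.mem_of_superset (Ico_mem_nhdsGE_of_mem ⟨hmem.1, ha⟩)
        (Ico_subset_Icc_self.trans hrange)

end G
end Construction

/-- A Cantor-like nonincreasing continuous function from `a` to `b`, locally constant with
values in a given dense set `S` on a full-measure open subset of `(0,1)`. -/
theorem stmt_13 (S : Set ℝ) (hS : Dense S) (a b : ℝ) (hab : b < a) :
    ∃ (h : ℝ → ℝ) (W : Set ℝ),
      ContinuousOn h (Set.Icc 0 1) ∧
      AntitoneOn h (Set.Icc 0 1) ∧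
      h 0 = a ∧ h 1 = b ∧
      IsOpen W ∧ W ⊆ Set.Ioo 0 1 ∧
      volume (Set.Icc 0 1 \ W) = 0 ∧
      (∀ x ∈ W, ∃ V, V ∈ nhds x ∧ V ⊆ W ∧ ∀ y ∈ V, h y = h x) ∧
      h '' W ⊆ S := by
  classical
  obtain ⟨q, hqinj, hqmem, hdense⟩ := exists_dense_seq_aux S hS a b hab
  have hq : ∀ n, q n ∈ Set.Ioo b a := fun n => (hqmem n).2
  set J : ℕ → Set ℝ := fun n => Set.Ioo (1 - (uf q (q n) + wt n)) (1 - uf q (q n)) with hJ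
  have hcw1 : ∀ n, uf q (q n) + wt n ≤ 1 := fun n =>
    (uf_key q n le_rfl (hq n).2).trans (uf_le_one q a)
  have hconstJ : ∀ n, ∀ y ∈ J n, gf a b q (1 - y) = q n := by
    intro n y hy
    have h1 : uf q (q n) < 1 - y := by have := hy.2; linarith
    have h2 : 1 - y < uf q (q n) + wt n := by have := hy.1; linarith
    exact gf_const q hab hq h1 h2
  have hWsub : (⋃ n, J n) ⊆ Set.Ioo 0 1 := by
    rintro y hy
    obtain ⟨n, hn⟩ := Set.mem_iUnion.1 hy
    have h1 := hcw1 n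
    have h2 := uf_nonneg q (q n)
    have h3 := hn.1
    have h4 := hn.2
    exact ⟨by linarith, by linarith⟩
  have hdisjpair : ∀ m n, q m < q n → Disjoint (J m) (J n) := by
    intro m n hmn
    have hk := uf_key q m le_rfl hmn
    rw [Set.disjoint_left]
    intro y hym hyn
    have h1 := hym.1
    have h2 := hyn.2
    linarith
  have hdisj : Pairwise (Function.onFun Disjoint J) := by
    intro m n hmn
    rcases lt_or_gt_of_ne (fun h => hmn (hqinj h)) with h | h
    · exact hdisjpair m n h
    · exact (hdisjpair n m h).symm
  have hWvol : volume (⋃ n, J n) = 1 := by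
    rw [measure_iUnion hdisj fun n => measurableSet_Ioo]
    have hv : ∀ n, volume (J n) = ENNReal.ofReal (wt n) := by
      intro n
      simp only [hJ]
      rw [Real.volume_Ioo]
      congr 1
      ring
    rw [tsum_congr hv, ← ENNReal.ofReal_tsum_of_nonneg (fun n => (wt_pos n).le) wt_summable,
      wt_tsum, ENNReal.ofReal_one]
  refine ⟨fun x => gf a b q (1 - x), ⋃ n, J n, ?_, ?_, ?_, ?_, ?_, hWsub, ?_, ?_, ?_⟩
  · exact ((gf_continuous q hab hdense).comp (by continuity)).continuousOn
  · intro x hx y hy hxy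
    exact gf_mono q hab (by linarith)
  · show gf a b q (1 - 0) = a
    rw [show (1:ℝ) - 0 = 1 by norm_num]
    exact gf_of_one_le q hab le_rfl
  · show gf a b q (1 - 1) = b
    rw [show (1:ℝ) - 1 = 0 by norm_num]
    exact gf_of_nonpos q hab hdense le_rfl
  · exact isOpen_iUnion fun n => isOpen_Ioo
  · rw [measure_diff (hWsub.trans Set.Ioo_subset_Icc_self)
      ((isOpen_iUnion fun n : ℕ => isOpen_Ioo).measurableSet.nullMeasurableSet)
      (hWvol ▸ ENNReal.one_ne_top), hWvol, Real.volume_Icc]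
    norm_num
  · intro x hx
    obtain ⟨n, hn⟩ := Set.mem_iUnion.1 hx
    exact ⟨J n, isOpen_Ioo.mem_nhds hn, Set.subset_iUnion J n,
      fun y hy => (hconstJ n y hy).trans (hconstJ n x hn).symm⟩
  · rintro _ ⟨x, hx, rfl⟩
    obtain ⟨n, hn⟩ := Set.mem_iUnion.1 hx
    show gf a b q (1 - x) ∈ S
    rw [hconstJ n x hn]
    exact (hqmem n).1
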